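/- Let q = x_0x_1 + x_2x_3 ∈ ℂ[x_0,x_1,x_2,x_3]. For all a_0, a_1, a_2 ∈ ℂ, the quadratic differential operator given by the form 3a_1^2·y_0^2 + 4a_0a_1·y_0y_1 + 3a_0^2·y_1^2 + 6a_1a_2·y_0y_3 + 6a_0a_2·y_1y_3 − 2a_0a_1·y_2y_3 + 3a_2^2·y_3^2 satisfies (3a_1^2y_0^2 + 4a_0a_1y_0y_1 + 3a_0^2y_1^2 + 6a_1a_2y_0y_3 + 6a_0a_2y_1y_3 − 2a_0a_1y_2y_3 + 3a_2^2y_3^2)(∂)(q^2) = 6·(a_0x_0 + a_1x_1 + a_2x_2)^2. (This describes the quadratic polarity correspondence q_l ↦ l^2 restricted to the tangent plane {y_3 = 0} of the inverse quadric Q^{-1} = {y_0y_1+y_2y_3=0} at the point (0:0:1:0).) -/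

import Mathlib

open MvPolynomial

/-- Iterated partial derivative `∂^α f`: `MvPolynomial.pderiv i` is applied `α i` times
for each variable `i`. -/
noncomputable def pdPow {n : ℕ} (α : Fin n →₀ ℕ) (f : MvPolynomial (Fin n) ℂ) :
    MvPolynomial (Fin n) ℂ :=
  (List.finRange n).foldr (fun i g => (fun h => MvPolynomial.pderiv i h)^[α i] g) f

/-- `g(∂)f`: the polynomial differential operator associated to `g` applied to `f`. -/
noncomputable def apolarAct {n : ℕ} (g f : MvPolynomial (Fin n) ℂ) :
    MvPolynomial (Fin n) ℂ :=
  (AddMonoidAlgebra.coeff g).sum fun α c => c • pdPow α f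


lemma apolarAct_add {n : ℕ} (g h f : MvPolynomial (Fin n) ℂ) :
    apolarAct (g + h) f = apolarAct g f + apolarAct h f := by
  unfold apolarAct; rw [AddMonoidAlgebra.coeff_add]
  exact Finsupp.sum_add_index' (by simp) (by intros; rw [add_smul])

lemma apolarAct_sub {n : ℕ} (g h f : MvPolynomial (Fin n) ℂ) :
    apolarAct (g - h) f = apolarAct g f - apolarAct h f := by
  unfold apolarAct; rw [AddMonoidAlgebra.coeff_sub]
  exact Finsupp.sum_sub_index (by intros; rw [sub_smul])

lemma apolarAct_monomial {n : ℕ} (α : Fin n →₀ ℕ) (c : ℂ) (f : MvPolynomial (Fin n) ℂ) :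
    apolarAct (monomial α c) f = c • pdPow α f := by
  unfold apolarAct
  show Finsupp.sum (Finsupp.single α c) (fun (α : Fin n →₀ ℕ) (c : ℂ) => c • pdPow α f) = _
  rw [Finsupp.sum_single_index (by simp)]

lemma Cmm (c : ℂ) (i j : Fin 4) :
    C c * X i * X j = monomial (Finsupp.single i 1 + Finsupp.single j 1) c := by
  rw [C_mul_X_eq_monomial, X, monomial_mul, mul_one]

lemma fsucc : (Fin.succ 2 : Fin 4) = 3 := rfl

lemma pd2 (i : Fin 4) : pderiv i (2 : MvPolynomial (Fin 4) ℂ) = 0 := by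
  rw [show (2 : MvPolynomial (Fin 4) ℂ) = C 2 by rw [map_ofNat], pderiv_C]

lemma pdPow4 (α : Fin 4 →₀ ℕ) (f : MvPolynomial (Fin 4) ℂ) : pdPow α f =
    (fun h => pderiv 0 h)^[α 0] ((fun h => pderiv 1 h)^[α 1] ((fun h => pderiv 2 h)^[α 2]
      ((fun h => pderiv 3 h)^[α 3] f))) := by
  simp [pdPow, List.finRange_succ]

/-- The quadratic polarity `q_l ↦ l^2` restricted to the tangent plane `{y_3 = 0}` of the
inverse quadric `{y_0y_1+y_2y_3=0}` at the point `(0:0:1:0)`, for `q = x_0x_1 + x_2x_3`: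
`(3a_1^2y_0^2 + 4a_0a_1y_0y_1 + 3a_0^2y_1^2 + 6a_1a_2y_0y_3 + 6a_0a_2y_1y_3
  − 2a_0a_1y_2y_3 + 3a_2^2y_3^2)(∂)(q^2) = 6(a_0x_0 + a_1x_1 + a_2x_2)^2`. -/
theorem statement14 (a0 a1 a2 : ℂ) :
    apolarAct
        (C (3 * a1 ^ 2) * X 0 ^ 2 + C (4 * a0 * a1) * X 0 * X 1
          + C (3 * a0 ^ 2) * X 1 ^ 2 + C (6 * a1 * a2) * X 0 * X 3
          + C (6 * a0 * a2) * X 1 * X 3 - C (2 * a0 * a1) * X 2 * X 3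
          + C (3 * a2 ^ 2) * X 3 ^ 2)
        ((X 0 * X 1 + X 2 * X 3 : MvPolynomial (Fin 4) ℂ) ^ 2)
      = 6 * (C a0 * X 0 + C a1 * X 1 + C a2 * X 2) ^ 2 := by
  rw [show (C (3 * a1 ^ 2) * X 0 ^ 2 : MvPolynomial (Fin 4) ℂ)
        = monomial (Finsupp.single 0 2) (3 * a1 ^ 2) from C_mul_X_pow_eq_monomial,
      show (C (3 * a0 ^ 2) * X 1 ^ 2 : MvPolynomial (Fin 4) ℂ)
        = monomial (Finsupp.single 1 2) (3 * a0 ^ 2) from C_mul_X_pow_eq_monomial,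
      show (C (3 * a2 ^ 2) * X 3 ^ 2 : MvPolynomial (Fin 4) ℂ)
        = monomial (Finsupp.single 3 2) (3 * a2 ^ 2) from C_mul_X_pow_eq_monomial,
      Cmm, Cmm, Cmm,
      Cmm]
  simp only [apolarAct_add, apolarAct_sub, apolarAct_monomial]
  have h00 : pdPow (Finsupp.single 0 2)
      ((X 0 * X 1 + X 2 * X 3 : MvPolynomial (Fin 4) ℂ) ^ 2) = 2 * X 1 ^ 2 := by
    rw [pdPow4]
    simp [ Finsupp.single_apply,
      Function.iterate_succ, Function.iterate_zero, pderiv_pow, pderiv_mul, pderiv_X, pd2, fsucc]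
    ring
  have h11 : pdPow (Finsupp.single 1 2)
      ((X 0 * X 1 + X 2 * X 3 : MvPolynomial (Fin 4) ℂ) ^ 2) = 2 * X 0 ^ 2 := by
    rw [pdPow4]
    simp [ Finsupp.single_apply,
      Function.iterate_succ, Function.iterate_zero, pderiv_pow, pderiv_mul, pderiv_X, pd2, fsucc]
    ring
  have h33 : pdPow (Finsupp.single 3 2)
      ((X 0 * X 1 + X 2 * X 3 : MvPolynomial (Fin 4) ℂ) ^ 2) = 2 * X 2 ^ 2 := by
    rw [pdPow4]
    simp [ Finsupp.single_apply,
      Function.iterate_succ, Function.iterate_zero, pderiv_pow, pderiv_mul, pderiv_X, pd2, fsucc]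
    ring
  have h01 : pdPow (Finsupp.single 0 1 + Finsupp.single 1 1)
      ((X 0 * X 1 + X 2 * X 3 : MvPolynomial (Fin 4) ℂ) ^ 2)
      = 4 * X 0 * X 1 + 2 * X 2 * X 3 := by
    rw [pdPow4]
    simp [ Finsupp.single_apply,
      Finsupp.add_apply, Function.iterate_succ, Function.iterate_zero, pderiv_pow,
      pderiv_mul, pderiv_X, pd2, fsucc]
    ring
  have h03 : pdPow (Finsupp.single 0 1 + Finsupp.single 3 1)
      ((X 0 * X 1 + X 2 * X 3 : MvPolynomial (Fin 4) ℂ) ^ 2) = 2 * X 1 * X 2 := by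
    rw [pdPow4]
    simp [ Finsupp.single_apply,
      Finsupp.add_apply, Function.iterate_succ, Function.iterate_zero, pderiv_pow,
      pderiv_mul, pderiv_X, pd2, fsucc]
    ring
  have h13 : pdPow (Finsupp.single 1 1 + Finsupp.single 3 1)
      ((X 0 * X 1 + X 2 * X 3 : MvPolynomial (Fin 4) ℂ) ^ 2) = 2 * X 0 * X 2 := by
    rw [pdPow4]
    simp [ Finsupp.single_apply,
      Finsupp.add_apply, Function.iterate_succ, Function.iterate_zero, pderiv_pow,
      pderiv_mul, pderiv_X, pd2, fsucc]
    ring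
  have h23 : pdPow (Finsupp.single 2 1 + Finsupp.single 3 1)
      ((X 0 * X 1 + X 2 * X 3 : MvPolynomial (Fin 4) ℂ) ^ 2)
      = 4 * X 2 * X 3 + 2 * X 0 * X 1 := by
    rw [pdPow4]
    simp [ Finsupp.single_apply,
      Finsupp.add_apply, Function.iterate_succ, Function.iterate_zero, pderiv_pow,
      pderiv_mul, pderiv_X, pd2, fsucc]
    ring
  rw [h00, h11, h33, h01, h03, h13, h23]
  simp only [smul_eq_C_mul, map_mul, map_ofNat, map_pow]
  ring
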